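/- arXiv:2211.13802 — 2 statements merged into one kernel-verified Lean document; each statement's English description precedes it below -/
import Mathlib

section
/- Let n, B, λ be fixed positive integers with λ < n. As W → ∞, the difference between the M-SGC load (λ+1)(W-1+B)/(n(B+(W-1)(λ+1))) and the lower bound (W-1+B)/(n(W-1)+B(n-λ)) is O(1/W); more precisely, the difference is at most C/W for some constant C depending only on n, B, λ and all W > B. -/
/-- The gap between the M-SGC load and the lower bound is `O(1/W)`. -/
theorem msgc_gap_O_one_div_W (n B lam : ℕ)
    (hn : 0 < n) (hB : 0 < B) (hlam : 0 < lam) (hln : lam < n) :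
    ∃ C : ℝ, 0 < C ∧ ∀ W : ℕ, B < W →
      ((lam : ℝ) + 1) * ((W : ℝ) - 1 + B) /
          ((n : ℝ) * ((B : ℝ) + ((W : ℝ) - 1) * ((lam : ℝ) + 1)))
        - ((W : ℝ) - 1 + B) / ((n : ℝ) * ((W : ℝ) - 1) + (B : ℝ) * ((n : ℝ) - lam))
        ≤ C / W := by
  refine ⟨4 * B * lam * n, by positivity, ?_⟩
  intro W hW
  have hn' : (1:ℝ) ≤ n := by exact_mod_cast hn
  have hB' : (1:ℝ) ≤ B := by exact_mod_cast hB
  have hlam' : (1:ℝ) ≤ lam := by exact_mod_cast hlam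
  have hln' : (lam:ℝ) + 1 ≤ n := by exact_mod_cast hln
  have hBW : (B:ℝ) ≤ (W:ℝ) - 1 := by
    have : (B:ℝ) + 1 ≤ W := by exact_mod_cast hW
    linarith
  have hx1 : (1:ℝ) ≤ (W:ℝ) - 1 := by linarith
  have hW2 : (W:ℝ) ≤ 2 * ((W:ℝ) - 1) := by linarith
  have hWpos : (0:ℝ) < W := by linarith
  set x : ℝ := (W:ℝ) - 1 with hxdef
  have hxpos : (0:ℝ) < x := by linarith
  have hxlam : x ≤ x * ((lam:ℝ) + 1) := le_mul_of_one_le_right hxpos.le (by linarith)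
  have hd1i : x ≤ (B:ℝ) + x * ((lam:ℝ) + 1) := by linarith
  have hd1' : x ≤ (n:ℝ) * ((B:ℝ) + x * ((lam:ℝ) + 1)) :=
    hd1i.trans (le_mul_of_one_le_left (by linarith) hn')
  have hd1 : (0:ℝ) < (n:ℝ) * ((B:ℝ) + x * ((lam:ℝ) + 1)) := lt_of_lt_of_le hxpos hd1'
  have hnx : x ≤ (n:ℝ) * x := le_mul_of_one_le_left hxpos.le hn'
  have hBnl : (0:ℝ) ≤ (B:ℝ) * ((n:ℝ) - lam) := mul_nonneg (by linarith) (by linarith)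
  have hd2' : x ≤ (n:ℝ) * x + (B:ℝ) * ((n:ℝ) - lam) := by linarith
  have hd2 : (0:ℝ) < (n:ℝ) * x + (B:ℝ) * ((n:ℝ) - lam) := lt_of_lt_of_le hxpos hd2'
  rw [div_sub_div _ _ hd1.ne' hd2.ne', div_le_div_iff₀ (by positivity) hWpos]
  have hnl : (0:ℝ) ≤ (n:ℝ) - lam - 1 := by linarith
  have s1 : (x + B) * ((n:ℝ) - lam - 1) ≤ (2 * x) * n := by nlinarith
  have s2 : (x + B) * ((n:ℝ) - lam - 1) * W ≤ (2 * x) * n * (2 * x) :=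
    mul_le_mul s1 hW2 hWpos.le (by positivity)
  have s3 : (B:ℝ) * lam * ((x + B) * ((n:ℝ) - lam - 1) * W) ≤
      (B:ℝ) * lam * ((2 * x) * n * (2 * x)) :=
    mul_le_mul_of_nonneg_left s2 (by positivity)
  have s4 : x * x ≤ ((n:ℝ) * ((B:ℝ) + x * ((lam:ℝ) + 1))) *
      ((n:ℝ) * x + (B:ℝ) * ((n:ℝ) - lam)) :=
    mul_le_mul hd1' hd2' hxpos.le (by linarith)
  have s5 : 4 * (B:ℝ) * lam * n * (x * x) ≤
      4 * (B:ℝ) * lam * n * (((n:ℝ) * ((B:ℝ) + x * ((lam:ℝ) + 1))) *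
      ((n:ℝ) * x + (B:ℝ) * ((n:ℝ) - lam))) :=
    mul_le_mul_of_nonneg_left s4 (by positivity)
  nlinarith [s3, s5]
end

section
/- Let B, W be positive integers with B < W, and suppose the binary straggler sequence S of a worker conforms to the (B,W,λ)-bursty model's temporal constraint. Fix round t. If the worker straggles in x' rounds within [t, t+W-2] for some x' ∈ [1, B], then the worker straggles in at most B - x' rounds within [t+W-1, t+W-2+B]. -/
/-- Bursty model: `x'` straggling rounds in `[t, t+W-2]` leave at most `B - x'`
straggling rounds in `[t+W-1, t+W-2+B]`. -/
theorem bursty_split_count (B W : ℕ) (hB : 0 < B) (hBW : B < W)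
    (S : ℤ → Bool)
    (hbursty : ∀ j u l : ℤ, u ∈ Set.Icc j (j + W - 1) → S u = true →
      l ∈ Set.Icc (u + B) (j + W - 1) → S l = false)
    (t : ℤ) (x' : ℕ) (hx1 : 1 ≤ x') (hxB : x' ≤ B)
    (hfirst : ((Finset.Icc t (t + W - 2)).filter (fun u => S u = true)).card = x') :
    ((Finset.Icc (t + W - 1) (t + W - 2 + B)).filter (fun u => S u = true)).card
      ≤ B - x' := by
  classical
  have hBZ : (0:ℤ) < B := by exact_mod_cast hB
  have hBWZ : (B:ℤ) < W := by exact_mod_cast hBW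
  set F : Finset ℤ := Finset.Icc t (t + W - 2) with hF
  set Y : Finset ℤ := (Finset.Icc (t + W - 1) (t + W - 2 + B)).filter
      (fun u => S u = true) with hYdef
  show Y.card ≤ B - x'
  rcases Finset.eq_empty_or_nonempty Y with hYe | hYne
  · simp [hYe]
  -- key: any straggler w in Y forces falseness in [w-W+1, w-B]
  have hfalse : ∀ w ∈ Y, ∀ v : ℤ, w - W + 1 ≤ v → v ≤ w - B → S v = false := by
    intro w hw v h1 h2
    have hSw : S w = true := (Finset.mem_filter.1 hw).2
    by_contra hv
    have hSv : S v = true := by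
      cases h : S v
      · exact absurd h hv
      · rfl
    have hfls : S w = false := by
      refine hbursty (w - W + 1) v w ⟨h1, by linarith⟩ hSv ⟨by linarith, by linarith⟩
    rw [hfls] at hSw
    exact Bool.false_ne_true hSw
  set wy := Y.max' hYne with hwy
  have hwyY : wy ∈ Y := Y.max'_mem hYne
  have hwyG : t + W - 1 ≤ wy ∧ wy ≤ t + W - 2 + B := by
    have := (Finset.mem_filter.1 hwyY).1
    exact Finset.mem_Icc.1 this
  set I : Finset ℤ := Finset.Icc (wy - W + 1) (wy - B) with hI
  set Im : Finset ℤ := Y.image (fun w => w - W + 1) with hIm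
  set U : Finset ℤ := I ∪ Im with hU
  -- U ⊆ F
  have hUF : U ⊆ F := by
    intro v hv
    rw [hU, Finset.mem_union] at hv
    rw [hF, Finset.mem_Icc]
    rcases hv with hv | hv
    · rw [hI, Finset.mem_Icc] at hv
      constructor <;> [linarith [hwyG.1, hv.1]; linarith [hwyG.2, hv.2]]
    · rw [hIm, Finset.mem_image] at hv
      obtain ⟨w, hw, rfl⟩ := hv
      have hwG : t + W - 1 ≤ w ∧ w ≤ t + W - 2 + B :=
        Finset.mem_Icc.1 (Finset.mem_filter.1 hw).1
      constructor <;> [linarith [hwG.1]; linarith [hwG.2]]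
  -- all of U is false
  have hUfalse : ∀ v ∈ U, S v = false := by
    intro v hv
    rw [hU, Finset.mem_union] at hv
    rcases hv with hv | hv
    · rw [hI, Finset.mem_Icc] at hv
      exact hfalse wy hwyY v hv.1 hv.2
    · rw [hIm, Finset.mem_image] at hv
      obtain ⟨w, hw, rfl⟩ := hv
      exact hfalse w hw _ le_rfl (by linarith)
  -- cardinalities
  have hIcard : I.card = W - B := by
    rw [hI, Int.card_Icc]
    omega
  have hImcard : Im.card = Y.card := by
    rw [hIm]
    apply Finset.card_image_of_injective
    intro a b hab
    simpa using hab
  have hinter : (I ∩ Im).card ≤ 1 := by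
    apply Finset.card_le_one.2
    intro a ha b hb
    have key : ∀ c ∈ I ∩ Im, c = wy - W + 1 := by
      intro c hc
      rw [Finset.mem_inter] at hc
      have h1 : wy - W + 1 ≤ c := (Finset.mem_Icc.1 (hI ▸ hc.1)).1
      obtain ⟨w, hw, rfl⟩ := Finset.mem_image.1 (hIm ▸ hc.2)
      have : w ≤ wy := Y.le_max' w hw
      linarith
    rw [key a ha, key b hb]
  have hUcard : W - B + Y.card ≤ U.card + 1 := by
    have h := Finset.card_union_add_card_inter I Im
    rw [hIcard, hImcard, ← hU] at h
    omega
  -- A and U disjoint, both in F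
  set A : Finset ℤ := F.filter (fun u => S u = true) with hA
  have hdisj : Disjoint A U := by
    rw [Finset.disjoint_left]
    intro a ha hb
    have h1 : S a = true := (Finset.mem_filter.1 ha).2
    have h2 : S a = false := hUfalse a hb
    rw [h1] at h2
    exact absurd h2 (by simp)
  have hsub : A ∪ U ⊆ F := by
    apply Finset.union_subset (Finset.filter_subset _ _) hUF
  have hFcard : F.card = W - 1 := by
    rw [hF, Int.card_Icc]
    omega
  have hle : A.card + U.card ≤ W - 1 := by
    rw [← Finset.card_union_of_disjoint hdisj, ← hFcard]
    exact Finset.card_le_card hsub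
  have hAx : A.card = x' := hfirst
  omega
end
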